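/- Let Q_n be defined by Q₀ = 1, Q₁(x) = x, Q_{n+1}(x) = x Q_n(x) − β_n Q_{n-1}(x) with β_n = n+2 for odd n and n for even n. Let u, v be pure unit quaternions and s, t positive reals with s ≠ t, and set K_n(us, vt) = Σ_{k=0}^{n} P_k(us) conj(P_k(vt))/h_k where P_k(us) = u^k Q_k(s). Then K_n(us, vt) = ρ_n(s,t)·(1 − uv)/2 + (−1)^n δ_n(s,t)·(1 + uv)/2, where ρ_n(s,t) = (Q_n(s)Q_{n+1}(t) − Q_{n+1}(s)Q_n(t))/(h_n(t − s)) and δ_n(s,t) = (Q_n(s)Q_{n+1}(t) + Q_{n+1}(s)Q_n(t))/(h_n(t + s)). -/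

import Mathlib

open Polynomial Quaternion Finset

noncomputable def β (n : ℕ) : ℝ := if Odd n then n + 2 else n

noncomputable def Q : ℕ → Polynomial ℝ
  | 0 => 1
  | 1 => X
  | (n + 2) => X * Q (n + 1) - C (β (n + 1)) * Q n

noncomputable def h (n : ℕ) : ℝ :=
  if Odd n then (n.factorial : ℝ) * (n + 2) else ((n + 1).factorial : ℝ)

/-- The kernel evaluated at `x = u s`, `y = v t`, using `P_k(us) = u^k Q_k(s)`. -/
noncomputable def K (n : ℕ) (u v : ℍ[ℝ]) (s t : ℝ) : ℍ[ℝ] :=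
  ∑ k ∈ range (n + 1),
    (h k)⁻¹ • (((Q k).eval s • u ^ k) * star ((Q k).eval t • v ^ k))

lemma hpos (n : ℕ) : 0 < h n := by
  unfold h; split
  · positivity
  · positivity

lemma hne (n : ℕ) : h n ≠ 0 := (hpos n).ne'

lemma hstep (n : ℕ) : h (n + 1) = β (n + 1) * h n := by
  rcases Nat.even_or_odd n with he | ho
  · have h1 : Odd (n + 1) := Even.add_one he
    have h2 : ¬ Odd n := by simpa using he
    simp only [h, β, h1, if_pos, h2, if_neg, Nat.factorial_succ]
    push_cast; ring
  · have h1 : ¬ Odd (n + 1) := by simpa using ho.add_one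
    simp only [h, β, h1, if_neg, ho, if_pos, Nat.factorial_succ]
    push_cast; ring

lemma Qrec (n : ℕ) (x : ℝ) :
    (Q (n + 2)).eval x = x * (Q (n + 1)).eval x - β (n + 1) * (Q n).eval x := by
  simp [Q]

lemma CD1 (s t : ℝ) (n : ℕ) :
    (t - s) * ∑ k ∈ range (n + 1), (h k)⁻¹ * ((Q k).eval s * (Q k).eval t)
      = ((Q n).eval s * (Q (n + 1)).eval t - (Q (n + 1)).eval s * (Q n).eval t) / h n := by
  induction n with
  | zero => simp [Q, h]
  | succ n ih =>
      rw [Finset.sum_range_succ, mul_add, ih, Qrec, Qrec, hstep]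
      have h1 := hne n
      have h2 : β (n + 1) * h n ≠ 0 := by rw [← hstep]; exact hne (n + 1)
      have h3 : β (n + 1) ≠ 0 := left_ne_zero_of_mul h2
      field_simp
      ring

lemma CD2 (s t : ℝ) (n : ℕ) :
    (t + s) * ∑ k ∈ range (n + 1), (-1 : ℝ) ^ k * ((h k)⁻¹ * ((Q k).eval s * (Q k).eval t))
      = (-1 : ℝ) ^ n * ((Q n).eval s * (Q (n + 1)).eval t + (Q (n + 1)).eval s * (Q n).eval t)
          / h n := by
  induction n with
  | zero => simp [Q, h]
  | succ n ih =>
      rw [Finset.sum_range_succ, mul_add, ih, Qrec, Qrec, hstep]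
      have h1 := hne n
      have h2 : β (n + 1) * h n ≠ 0 := by rw [← hstep]; exact hne (n + 1)
      have h3 : β (n + 1) ≠ 0 := left_ne_zero_of_mul h2
      field_simp
      ring

lemma sq_pure (u : ℍ[ℝ]) (hu : u.re = 0) (hu1 : ‖u‖ = 1) : u * u = -1 := by
  have h1 : star u = -u := Quaternion.star_eq_neg.mpr hu
  have h2 : u * star u = 1 := by
    rw [Quaternion.self_mul_star, Quaternion.normSq_eq_norm_mul_self, hu1]
    norm_num
  rw [h1, mul_neg] at h2
  exact neg_eq_iff_eq_neg.mp h2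

lemma key (u v : ℍ[ℝ]) (hu2 : u * u = -1) (hv2 : v * v = -1) (hvs : star v = -v) (k : ℕ) :
    u ^ k * star (v ^ k)
      = (2⁻¹ : ℝ) • (1 - u * v) + ((-1 : ℝ) ^ k * 2⁻¹) • (1 + u * v) := by
  induction k using Nat.twoStepInduction with
  | zero => simp; module
  | one =>
      simp only [pow_one, hvs, mul_neg, pow_succ, pow_zero, one_mul]
      module
  | more k ih1 _ =>
      rw [pow_add, pow_add, pow_two, pow_two, hu2, hv2, star_mul, star_neg, star_one]
      simp only [mul_neg, neg_mul, mul_one, one_mul, neg_neg]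
      rw [ih1]
      have : ((-1 : ℝ)) ^ (k + 2) = (-1 : ℝ) ^ k := by ring
      rw [this]

theorem stmt16 (n : ℕ) (u v : ℍ[ℝ])
    (hu : u.re = 0) (hu1 : ‖u‖ = 1) (hv : v.re = 0) (hv1 : ‖v‖ = 1)
    (s t : ℝ) (hs : 0 < s) (ht : 0 < t) (hst : s ≠ t) :
    K n u v s t
      = (((Q n).eval s * (Q (n + 1)).eval t - (Q (n + 1)).eval s * (Q n).eval t)
            / (h n * (t - s)) / 2) • (1 - u * v)
        + ((-1 : ℝ) ^ n *
            (((Q n).eval s * (Q (n + 1)).eval t + (Q (n + 1)).eval s * (Q n).eval t)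
              / (h n * (t + s))) / 2) • (1 + u * v) := by
  have hu2 := sq_pure u hu hu1
  have hv2 := sq_pure v hv hv1
  have hvs : star v = -v := Quaternion.star_eq_neg.mpr hv
  have hts : t - s ≠ 0 := sub_ne_zero.mpr (Ne.symm hst)
  have hts' : t + s ≠ 0 := by positivity
  have expand : ∀ k ∈ range (n + 1),
      (h k)⁻¹ • (((Q k).eval s • u ^ k) * star ((Q k).eval t • v ^ k))
        = ((h k)⁻¹ * ((Q k).eval s * (Q k).eval t) * 2⁻¹) • (1 - u * v)
          + ((-1 : ℝ) ^ k * ((h k)⁻¹ * ((Q k).eval s * (Q k).eval t)) * 2⁻¹) • (1 + u * v) := by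
    intro k _
    rw [Quaternion.star_smul, smul_mul_assoc, mul_smul_comm, key u v hu2 hv2 hvs k]
    simp only [smul_add, smul_smul]
    module
  rw [K, Finset.sum_congr rfl expand, Finset.sum_add_distrib, ← Finset.sum_smul,
    ← Finset.sum_smul]
  have hA : ∑ k ∈ range (n + 1), (h k)⁻¹ * ((Q k).eval s * (Q k).eval t) * 2⁻¹
      = ((Q n).eval s * (Q (n + 1)).eval t - (Q (n + 1)).eval s * (Q n).eval t)
          / (h n * (t - s)) / 2 := by
    have hcd := CD1 s t n
    rw [eq_div_iff (hne n)] at hcd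
    rw [← Finset.sum_mul]
    generalize (∑ k ∈ range (n + 1), (h k)⁻¹ * ((Q k).eval s * (Q k).eval t)) = S at hcd ⊢
    rw [div_div, eq_div_iff (by exact mul_ne_zero (mul_ne_zero (hne n) hts) two_ne_zero)]
    linear_combination hcd
  have hB : ∑ k ∈ range (n + 1),
        (-1 : ℝ) ^ k * ((h k)⁻¹ * ((Q k).eval s * (Q k).eval t)) * 2⁻¹
      = (-1 : ℝ) ^ n *
          (((Q n).eval s * (Q (n + 1)).eval t + (Q (n + 1)).eval s * (Q n).eval t)
            / (h n * (t + s))) / 2 := by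
    have hcd := CD2 s t n
    rw [eq_div_iff (hne n)] at hcd
    rw [← Finset.sum_mul]
    generalize (∑ k ∈ range (n + 1),
        (-1 : ℝ) ^ k * ((h k)⁻¹ * ((Q k).eval s * (Q k).eval t))) = S at hcd ⊢
    rw [← mul_div_assoc, div_div, eq_div_iff (by exact mul_ne_zero (mul_ne_zero (hne n) hts') two_ne_zero)]
    linear_combination hcd
  rw [hA, hB]
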